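/- Suppose U ξ = ξ. Then for every x ∈ H with ‖x‖ ≤ 1, the equality U(A x) + ξ = (⟨x,ξ⟩ + a)·x holds if and only if x = ξ/‖ξ‖ or x = −ξ/‖ξ‖. In particular, the induced isometry x ↦ (⟨x,ξ⟩ + a)⁻¹·(U(A x) + ξ) of the Carathéodory-metric Hilbert ball has no fixed point in the open unit ball and exactly two fixed points, both on the unit sphere (it is hyperbolic). -/

import Mathlib

open scoped InnerProductSpace

/-- With `ξ ≠ 0`, `a = √(1 + ‖ξ‖²)`, `A x = x + ((a−1)/‖ξ‖²)·⟨x,ξ⟩·ξ`, and `U` unitary with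
`U ξ = ξ`: for every `x` with `‖x‖ ≤ 1` the equality `U(A x) + ξ = (⟨x,ξ⟩ + a)·x` holds iff
`x = ξ/‖ξ‖` or `x = −ξ/‖ξ‖`; these two fixed points of the induced isometry
`x ↦ (⟨x,ξ⟩ + a)⁻¹·(U(A x) + ξ)` of the Hilbert ball both lie on the unit sphere, and the
isometry has no fixed point in the open unit ball (it is hyperbolic).
(The paper's inner product `⟨x,y⟩` is linear in the first slot, i.e. `⟪y,x⟫_ℂ` in Mathlib's
convention.) -/
theorem stmt13 {H : Type*} [NormedAddCommGroup H] [InnerProductSpace ℂ H] [CompleteSpace H]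
    (ξ : H) (hξ : ξ ≠ 0) (a : ℝ) (ha : a = Real.sqrt (1 + ‖ξ‖ ^ 2))
    (A : H →L[ℂ] H)
    (hA : ∀ x : H, A x = x + ((((a - 1) / ‖ξ‖ ^ 2 : ℝ) : ℂ) * ⟪ξ, x⟫_ℂ) • ξ)
    (U : H →L[ℂ] H) (hU : U ∈ unitary (H →L[ℂ] H)) (hUξ : U ξ = ξ) :
    (∀ x : H, ‖x‖ ≤ 1 →
        (U (A x) + ξ = (⟪ξ, x⟫_ℂ + (a : ℂ)) • x ↔
          x = (‖ξ‖ : ℂ)⁻¹ • ξ ∨ x = -((‖ξ‖ : ℂ)⁻¹ • ξ))) ∧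
      ‖(‖ξ‖ : ℂ)⁻¹ • ξ‖ = 1 ∧
      ∀ x : H, ‖x‖ < 1 → (⟪ξ, x⟫_ℂ + (a : ℂ))⁻¹ • (U (A x) + ξ) ≠ x := by
  set r : ℝ := ‖ξ‖ with hrdef
  have hr : 0 < r := norm_pos_iff.mpr hξ
  have hr0 : (r:ℝ) ≠ 0 := ne_of_gt hr
  have hr0C : ((r:ℂ)) ≠ 0 := by exact_mod_cast hr0
  have ha2 : a ^ 2 = 1 + r ^ 2 := by
    rw [ha]; exact Real.sq_sqrt (by positivity)
  have ha1 : 1 < a := by nlinarith [Real.sqrt_nonneg (1 + r^2), ha2]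
  have har : r < a := by nlinarith
  have hinner_self : ⟪ξ, ξ⟫_ℂ = ((r:ℂ))^2 := by
    rw [inner_self_eq_norm_sq_to_K]; norm_cast
  have hn1 : ‖((r:ℂ))⁻¹ • ξ‖ = 1 := by
    rw [norm_smul, norm_inv, Complex.norm_real, Real.norm_eq_abs, abs_of_pos hr]
    field_simp; exact hrdef.symm
  -- backward direction computation
  have hback : ∀ s : ℂ, s ^ 2 * (r:ℂ) ^ 2 = 1 →
      U (A (s • ξ)) + ξ = (⟪ξ, s • ξ⟫_ℂ + (a:ℂ)) • (s • ξ) := by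
    intro s hs
    have hAs : A (s • ξ) = (s * a) • ξ := by
      rw [hA, inner_smul_right, hinner_self]
      match_scalars
      field_simp
      ring
    rw [hAs, map_smul, hUξ, inner_smul_right, hinner_self]
    match_scalars
    linear_combination -hs
  -- the key iff, with no norm hypothesis needed
  have key : ∀ x : H, (U (A x) + ξ = (⟪ξ, x⟫_ℂ + (a : ℂ)) • x ↔
      x = (‖ξ‖ : ℂ)⁻¹ • ξ ∨ x = -((‖ξ‖ : ℂ)⁻¹ • ξ)) := by
    intro x
    constructor
    · intro heq
      set α : ℂ := ⟪ξ, x⟫_ℂ / (r^2 : ℂ) with hαdef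
      set y : H := x - α • ξ with hydef
      have hc : ⟪ξ, x⟫_ℂ = α * r^2 := by
        rw [hαdef, div_mul_cancel₀ _ (pow_ne_zero 2 hr0C)]
      have hy : ⟪ξ, y⟫_ℂ = 0 := by
        rw [hydef, inner_sub_right, inner_smul_right, hinner_self, hc]; ring
      have hx : x = α • ξ + y := by rw [hydef]; abel
      have hUy : ⟪ξ, U y⟫_ℂ = 0 := by
        rw [← hUξ, ContinuousLinearMap.inner_map_map_of_mem_unitary hU, hy]
      have hAx : A x = (α * a) • ξ + y := by
        rw [hA, hc]; rw [hx]
        match_scalars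
        · field_simp; ring
        · ring
      have hUAx : U (A x) = (α * a) • ξ + U y := by
        rw [hAx, map_add, map_smul, hUξ]
      -- inner product of both sides of heq with ξ
      have h1 : ⟪ξ, U (A x) + ξ⟫_ℂ = α * a * r^2 + r^2 := by
        rw [hUAx, inner_add_right, inner_add_right, inner_smul_right, hinner_self, hUy]
        ring
      have h2 : ⟪ξ, (⟪ξ, x⟫_ℂ + (a:ℂ)) • x⟫_ℂ = (α * r^2 + a) * (α * r^2) := by
        rw [inner_smul_right, hc]
      have h3 : α * a * r^2 + r^2 = (α * r^2 + a) * (α * r^2) := by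
        rw [← h1, ← h2, heq]
      have hα2 : α^2 * (r:ℂ)^2 = 1 := by
        have h5 : (α^2 * (r:ℂ)^2 - 1) * (r:ℂ)^2 = 0 := by linear_combination -h3
        have h6 := (mul_eq_zero.mp h5).resolve_right (pow_ne_zero 2 hr0C)
        linear_combination h6
      have hαor : α = ((r:ℂ))⁻¹ ∨ α = -((r:ℂ))⁻¹ := by
        have h7 : (α - ((r:ℂ))⁻¹) * (α + ((r:ℂ))⁻¹) = 0 := by
          have h8 : (α - ((r:ℂ))⁻¹) * (α + ((r:ℂ))⁻¹) = (α^2 * (r:ℂ)^2 - 1) / (r:ℂ)^2 := by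
            field_simp; ring
          rw [h8, hα2, sub_self, zero_div]
        rcases mul_eq_zero.mp h7 with h | h
        · exact Or.inl (sub_eq_zero.mp h)
        · exact Or.inr (eq_neg_of_add_eq_zero_left h)
      -- the orthogonal part
      have e2 : U y = (α * r^2 + a) • (α • ξ + y) - (α * a) • ξ - ξ := by
        have e := heq
        rw [hUAx, hc, hx] at e
        rw [← e]; abel
      have e3 : (α * (r:ℂ)^2 + a) • (α • ξ + y) - (α * a) • ξ - ξ = (α * r^2 + a) • y := by
        match_scalars
        · linear_combination hα2
        · ring
      have hUy2 : U y = (α * (r:ℂ)^2 + a) • y := e2.trans e3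
      have hy0 : y = 0 := by
        by_contra hy0
        have hnz : ‖y‖ ≠ 0 := norm_ne_zero_iff.mpr hy0
        have hnorm : ‖U y‖ = ‖y‖ := ContinuousLinearMap.norm_map_of_mem_unitary hU y
        rw [hUy2, norm_smul] at hnorm
        have habs : ‖(α * (r:ℂ)^2 + a)‖ = 1 :=
          mul_right_cancel₀ hnz (hnorm.trans (one_mul ‖y‖).symm)
        rcases hαor with h | h
        · have h9 : α * (r:ℂ)^2 + a = ((r + a : ℝ) : ℂ) := by
            rw [h]; push_cast; field_simp
          rw [h9, Complex.norm_real, Real.norm_eq_abs, abs_of_pos (by linarith)] at habs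
          linarith
        · have h9 : α * (r:ℂ)^2 + a = ((a - r : ℝ) : ℂ) := by
            rw [h]; push_cast; field_simp; ring
          rw [h9, Complex.norm_real, Real.norm_eq_abs, abs_of_pos (by linarith)] at habs
          nlinarith
      rw [hy0, add_zero] at hx
      rcases hαor with h | h
      · exact Or.inl (by rw [hx, h])
      · exact Or.inr (by rw [hx, h, neg_smul])
    · rintro (hx | hx)
      · rw [hx]; exact hback _ (by field_simp; rw [← hrdef]; exact div_self (pow_ne_zero 2 hr0C))
      · rw [hx, ← neg_smul]; exact hback _ (by field_simp; rw [← hrdef]; exact div_self (pow_ne_zero 2 hr0C))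
  refine ⟨fun x _ => key x, hn1, ?_⟩
  intro x hx1 hfix
  have hcle : ‖⟪ξ, x⟫_ℂ‖ ≤ r * ‖x‖ := norm_inner_le_norm ξ x
  have hne : ⟪ξ, x⟫_ℂ + (a:ℂ) ≠ 0 := by
    intro h0
    have h0' : ⟪ξ, x⟫_ℂ = ((-a : ℝ) : ℂ) := by push_cast; linear_combination h0
    rw [h0', Complex.norm_real, Real.norm_eq_abs, abs_of_neg (by linarith)] at hcle
    nlinarith
  have heq : U (A x) + ξ = (⟪ξ, x⟫_ℂ + (a:ℂ)) • x := by
    have h10 := congrArg (fun v => (⟪ξ, x⟫_ℂ + (a:ℂ)) • v) hfix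
    simpa [smul_smul, mul_inv_cancel₀ hne] using h10
  rcases (key x).mp heq with h | h
  · rw [h] at hx1; rw [hn1] at hx1; exact absurd hx1 (lt_irrefl 1)
  · rw [h, norm_neg, hn1] at hx1; exact absurd hx1 (lt_irrefl 1)
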